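/- Let A be the Artin group of a connected simply laced spherical type with standard generators s_1,...,s_n, and let s_β denote the canonical lift to A of the reflection r_β for a positive root β (image under the section ψ of reduced words). If i is a node and β a positive root with (α_i, β) = 0, then s_i s_β = s_β s_i in A. -/

import Mathlib

noncomputable section

open scoped RealInnerProductSpace

/-- The braid relators defining the Artin group of a simply laced diagram with
adjacency relation `adj`. -/
def ArtinRels (n : ℕ) (adj : Fin n → Fin n → Prop) : Set (FreeGroup (Fin n)) :=
  {w | (∃ i j, i ≠ j ∧ ¬ adj i j ∧
          w = FreeGroup.of i * FreeGroup.of j * (FreeGroup.of i)⁻¹ * (FreeGroup.of j)⁻¹) ∨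
       (∃ i j, adj i j ∧
          w = FreeGroup.of i * FreeGroup.of j * FreeGroup.of i *
              (FreeGroup.of j)⁻¹ * (FreeGroup.of i)⁻¹ * (FreeGroup.of j)⁻¹)}

/-- The Artin group of the diagram. -/
abbrev Artin (n : ℕ) (adj : Fin n → Fin n → Prop) : Type := PresentedGroup (ArtinRels n adj)

/-- The standard generator `s_i` of the Artin group. -/
def sgen (n : ℕ) (adj : Fin n → Fin n → Prop) (i : Fin n) : Artin n adj :=
  PresentedGroup.of i


lemma det_of_reflection {d : ℕ} (u : EuclideanSpace ℝ (Fin d)) (hu : ⟪u, u⟫ = 2)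
    (f : EuclideanSpace ℝ (Fin d) ≃ₗ[ℝ] EuclideanSpace ℝ (Fin d))
    (hf : ∀ v, f v = v - ⟪u, v⟫ • u) :
    LinearMap.det (f : EuclideanSpace ℝ (Fin d) →ₗ[ℝ] EuclideanSpace ℝ (Fin d)) = -1 := by
  have hu0 : u ≠ 0 := by
    intro h
    rw [h] at hu
    simp at hu
  set K : Submodule ℝ (EuclideanSpace ℝ (Fin d)) := ℝ ∙ u with hK
  have hnormsq : ((‖u‖ : ℝ) : ℝ) ^ 2 = 2 := by
    rw [← real_inner_self_eq_norm_sq]; exact hu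
  have key : (f : EuclideanSpace ℝ (Fin d) →ₗ[ℝ] EuclideanSpace ℝ (Fin d))
      = (Kᗮ.reflection).toLinearMap := by
    apply LinearMap.ext
    intro v
    have hproj := K.starProjection_add_starProjection_orthogonal v
    have hKproj : (K.starProjection v : EuclideanSpace ℝ (Fin d)) = (⟪u, v⟫ / 2) • u := by
      rw [Submodule.starProjection_singleton, hnormsq]; norm_cast
    have hKc : (Kᗮ.starProjection v : EuclideanSpace ℝ (Fin d))
        = v - (⟪u, v⟫ / 2) • u := by
      rw [← hKproj]; linear_combination (norm := module) hproj
    show f v = Kᗮ.reflection v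
    rw [hf, Submodule.reflection_apply, hKc, two_smul]
    module
  rw [key, Submodule.det_reflection, Submodule.orthogonal_orthogonal, hK,
    finrank_span_singleton hu0, pow_one]

/-- Let `A` be the Artin group of a connected simply laced spherical type, `W` the
corresponding Weyl group with simple roots `α`, length function `ℓ`, and `ψ : W → A`
the canonical section sending an element with reduced word `ω` to the corresponding
product of generators. If `β` is a positive root orthogonal to the simple root `α i`,
and `ρ ∈ W` is the reflection with root `β`, then `s_i` commutes with `s_β = ψ ρ`. -/
theorem artin_si_commutes_with_sbeta (n d : ℕ)
    (α : Fin n → EuclideanSpace ℝ (Fin d))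
    (hind : LinearIndependent ℝ α)
    (hnorm : ∀ i, ⟪α i, α i⟫ = 2)
    (hcartan : ∀ i j, i ≠ j → ⟪α i, α j⟫ = 0 ∨ ⟪α i, α j⟫ = -1)
    (hconn : ∀ i j : Fin n, ∃ p : List (Fin n), p ≠ [] ∧ p.head? = some i ∧
      p.getLast? = some j ∧ p.Chain' (fun a b => ⟪α a, α b⟫ = -1))
    (r : Fin n → (EuclideanSpace ℝ (Fin d) ≃ₗ[ℝ] EuclideanSpace ℝ (Fin d)))
    (hr : ∀ i v, r i v = v - ⟪α i, v⟫ • α i)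
    (W : Subgroup (EuclideanSpace ℝ (Fin d) ≃ₗ[ℝ] EuclideanSpace ℝ (Fin d)))
    (hW : W = Subgroup.closure (Set.range r))
    (hfin : Finite W)
    (Φ : Set (EuclideanSpace ℝ (Fin d)))
    (hΦ : Φ = {β | ∃ w ∈ W, ∃ i, w (α i) = β})
    (ℓ : W → ℕ)
    (hℓ : ∀ w : W, ℓ w = sInf {k | ∃ ω : List (Fin n),
      ω.length = k ∧ w.1 = (ω.map r).prod})
    (adj : Fin n → Fin n → Prop)
    (hadj : ∀ i j, adj i j ↔ ⟪α i, α j⟫ = -1)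
    (ψ : W → Artin n adj)
    (hψ : ∀ (w : W) (ω : List (Fin n)), w.1 = (ω.map r).prod → ω.length = ℓ w →
      ψ w = (ω.map (sgen n adj)).prod)
    (i : Fin n) (β : EuclideanSpace ℝ (Fin d)) (c : Fin n → ℕ)
    (hβΦ : β ∈ Φ) (hβc : β = ∑ k, (c k : ℝ) • α k)
    (ρ : W) (hρ : ∀ v, ρ.1 v = v - ⟪β, v⟫ • β)
    (horth : ⟪α i, β⟫ = 0) :
    sgen n adj i * ψ ρ = ψ ρ * sgen n adj i := by
  classical
  -- each generator is an involution
  have hrr : ∀ j, r j * r j = 1 := by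
    intro j
    refine LinearEquiv.ext fun v => ?_
    show r j (r j v) = v
    rw [hr, hr, inner_sub_right, inner_smul_right, hnorm]
    module
  have hrinv : ∀ j, (r j)⁻¹ = r j := fun j => inv_eq_of_mul_eq_one_right (hrr j)
  -- `r i` commutes with `ρ`
  have hba : ⟪β, α i⟫ = 0 := by rw [real_inner_comm]; exact horth
  have hcomm : r i * ρ.1 = ρ.1 * r i := by
    refine LinearEquiv.ext fun v => ?_
    show r i (ρ.1 v) = ρ.1 (r i v)
    rw [hr, hρ, hρ, hr, inner_sub_right, inner_sub_right, inner_smul_right,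
      inner_smul_right, horth, hba]
    module
  have hri : r i ∈ W := by rw [hW]; exact Subgroup.subset_closure ⟨i, rfl⟩
  set riW : W := ⟨r i, hri⟩ with hriWdef
  have hriW2 : riW * riW = 1 := Subtype.ext (hrr i)
  set σ : W := riW * ρ with hσ
  have hσ1 : σ.1 = r i * ρ.1 := rfl
  have hσ2 : σ.1 = ρ.1 * r i := by rw [hσ1, hcomm]
  have hρ2 : ρ.1 = σ.1 * r i := by
    rw [hσ1, mul_assoc, ← hcomm, ← mul_assoc, hrr, one_mul]
  -- every element of `W` is a product of generators
  have hword' : ∀ g ∈ Subgroup.closure (Set.range r),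
      ∃ ω : List (Fin n), g = (ω.map r).prod := by
    intro g hg
    induction hg using Subgroup.closure_induction with
    | mem g hg =>
      obtain ⟨j, rfl⟩ := hg
      exact ⟨[j], by simp⟩
    | one => exact ⟨[], by simp⟩
    | mul g₁ g₂ _ _ h₁ h₂ =>
      obtain ⟨ω₁, hω₁⟩ := h₁
      obtain ⟨ω₂, hω₂⟩ := h₂
      exact ⟨ω₁ ++ ω₂, by simp [hω₁, hω₂]⟩
    | inv g _ h =>
      obtain ⟨ω, hω⟩ := h
      refine ⟨ω.reverse, ?_⟩
      rw [hω, List.prod_inv_reverse]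
      have hmap : ((fun x => x⁻¹) ∘ r) = r := funext fun j => hrinv j
      simp [List.map_map, hmap, List.map_reverse]
  have hword : ∀ w : W, ∃ ω : List (Fin n), w.1 = (ω.map r).prod :=
    fun w => hword' w.1 (hW ▸ w.2)
  -- reduced words exist
  have hmem : ∀ w : W, ∃ ω : List (Fin n), ω.length = ℓ w ∧ w.1 = (ω.map r).prod := by
    intro w
    obtain ⟨ω, hω⟩ := hword w
    have hne : {k | ∃ ω : List (Fin n), ω.length = k ∧ w.1 = (ω.map r).prod}.Nonempty :=
      ⟨ω.length, ω, rfl, hω⟩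
    obtain ⟨ω', hω'len, hω'⟩ := Nat.sInf_mem hne
    exact ⟨ω', by rw [hℓ w]; exact hω'len, hω'⟩
  have hle : ∀ (w : W) (ω : List (Fin n)), w.1 = (ω.map r).prod → ℓ w ≤ ω.length := by
    intro w ω h
    rw [hℓ w]
    exact Nat.sInf_le ⟨ω, rfl, h⟩
  -- determinant and parity
  have hdetr : ∀ j, LinearMap.det ((r j : EuclideanSpace ℝ (Fin d) ≃ₗ[ℝ]
      EuclideanSpace ℝ (Fin d)) : EuclideanSpace ℝ (Fin d) →ₗ[ℝ] EuclideanSpace ℝ (Fin d))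
      = -1 := fun j => det_of_reflection (α j) (hnorm j) (r j) (hr j)
  have hdetword : ∀ ω : List (Fin n),
      LinearMap.det (((ω.map r).prod : EuclideanSpace ℝ (Fin d) ≃ₗ[ℝ] EuclideanSpace ℝ (Fin d))
        : EuclideanSpace ℝ (Fin d) →ₗ[ℝ] EuclideanSpace ℝ (Fin d)) = (-1) ^ ω.length := by
    intro ω
    induction ω with
    | nil => simp
    | cons j ω ih =>
      rw [List.map_cons, List.prod_cons, List.length_cons,
        LinearEquiv.coe_toLinearMap_mul, map_mul, ih, hdetr, pow_succ]
      ring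
  have hdet : ∀ w : W, LinearMap.det ((w.1 : EuclideanSpace ℝ (Fin d) ≃ₗ[ℝ]
      EuclideanSpace ℝ (Fin d)) : EuclideanSpace ℝ (Fin d) →ₗ[ℝ] EuclideanSpace ℝ (Fin d))
      = (-1) ^ (ℓ w) := by
    intro w
    obtain ⟨ω, hlen, hprod⟩ := hmem w
    rw [hprod, hdetword, hlen]
  obtain ⟨ωρ, hωρlen, hωρ⟩ := hmem ρ
  obtain ⟨ωσ, hωσlen, hωσ⟩ := hmem σ
  have hψρ := hψ ρ ωρ hωρ hωρlen
  -- words for σ, ρ obtained by adding the letter i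
  have e1 : σ.1 = ((i :: ωρ).map r).prod := by
    rw [hσ1, hωρ]; simp
  have e2 : ρ.1 = ((i :: ωσ).map r).prod := by
    have h : ρ.1 = r i * σ.1 := by rw [hσ1, ← mul_assoc, hrr, one_mul]
    rw [h, hωσ]; simp
  have l1 : ℓ σ ≤ ℓ ρ + 1 := by
    have h := hle σ (i :: ωρ) e1
    simpa [hωρlen] using h
  have l2 : ℓ ρ ≤ ℓ σ + 1 := by
    have h := hle ρ (i :: ωσ) e2
    simpa [hωσlen] using h
  have hneq : ℓ σ ≠ ℓ ρ := by
    intro h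
    have h1 := hdet σ
    have h2 := hdet ρ
    have h3 : (σ.1 : EuclideanSpace ℝ (Fin d) →ₗ[ℝ] EuclideanSpace ℝ (Fin d))
        = ((r i : EuclideanSpace ℝ (Fin d) ≃ₗ[ℝ] EuclideanSpace ℝ (Fin d))
          : EuclideanSpace ℝ (Fin d) →ₗ[ℝ] EuclideanSpace ℝ (Fin d))
          * ((ρ.1 : EuclideanSpace ℝ (Fin d) ≃ₗ[ℝ] EuclideanSpace ℝ (Fin d))
          : EuclideanSpace ℝ (Fin d) →ₗ[ℝ] EuclideanSpace ℝ (Fin d)) := by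
      rw [hσ1]; exact LinearEquiv.coe_toLinearMap_mul
    rw [h3, map_mul, hdetr, h2, h] at h1
    have h4 : ((-1 : ℝ)) ^ (ℓ ρ) ≠ 0 := pow_ne_zero _ (by norm_num)
    have h5 : ((-1 : ℝ)) ^ (ℓ ρ) = -((-1 : ℝ)) ^ (ℓ ρ) := by linarith [h1]
    apply h4
    linarith [h5]
  have hcases : ℓ σ = ℓ ρ + 1 ∨ ℓ ρ = ℓ σ + 1 := by omega
  rcases hcases with hA | hB
  · -- ℓ σ = ℓ ρ + 1 : both i :: ωρ and ωρ ++ [i] are reduced words for σ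
    have len1 : (i :: ωρ).length = ℓ σ := by simp [hωρlen, hA]
    have hψσ1 := hψ σ (i :: ωρ) e1 len1
    have e1' : σ.1 = ((ωρ ++ [i]).map r).prod := by
      rw [hσ2, hωρ]; simp
    have len2 : (ωρ ++ [i]).length = ℓ σ := by simp [hωρlen, hA]
    have hψσ2 := hψ σ (ωρ ++ [i]) e1' len2
    have c1 : ψ σ = sgen n adj i * ψ ρ := by rw [hψσ1, hψρ]; simp
    have c2 : ψ σ = ψ ρ * sgen n adj i := by rw [hψσ2, hψρ]; simp
    rw [← c1, c2]
  · -- ℓ ρ = ℓ σ + 1 : both i :: ωσ and ωσ ++ [i] are reduced words for ρ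
    have hψσ := hψ σ ωσ hωσ hωσlen
    have len1 : (i :: ωσ).length = ℓ ρ := by simp [hωσlen, hB]
    have hψρ1 := hψ ρ (i :: ωσ) e2 len1
    have e2' : ρ.1 = ((ωσ ++ [i]).map r).prod := by
      rw [hρ2, hωσ]; simp
    have len2 : (ωσ ++ [i]).length = ℓ ρ := by simp [hωσlen, hB]
    have hψρ2 := hψ ρ (ωσ ++ [i]) e2' len2
    have c1 : ψ ρ = sgen n adj i * ψ σ := by rw [hψρ1, hψσ]; simp
    have c2 : ψ ρ = ψ σ * sgen n adj i := by rw [hψρ2, hψσ]; simp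
    calc sgen n adj i * ψ ρ = (sgen n adj i * ψ σ) * sgen n adj i := by
          rw [c2, mul_assoc]
      _ = ψ ρ * sgen n adj i := by rw [← c1]
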